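/- Feasibility of insertion (Lemma: Feasibility of an Insertion): Let A be a time-feasible tour, ã a new customer with assigned window w_ℓ to be inserted between a_i and a_{i+1}. Define α_ã := max{s_{w_ℓ}, α_{a_i} + s(a_i) + t(a_i, ã)} and β_ã := min{e_{w_ℓ}, β_{a_{i+1}} − s(ã) − t(ã, a_{i+1})}. If α_ã ≤ β_ã, then the tour A +_i ã (obtained by inserting ã after position i) is time-feasible. -/

import Mathlib

/-- The tour obtained from `a` by inserting the new customer `x` between
positions `i` and `i+1`. -/
def insertAt {Loc : Type} (a : ℕ → Loc) (x : Loc) (i : ℕ) : ℕ → Loc :=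
  fun j => if j ≤ i then a j else if j = i + 1 then x else a (j - 1)

/-- Feasibility of an insertion (Lemma "Feasibility of an Insertion"):
if `α̃ := max{s_{w_ℓ}, α_{a_i} + s(a_i) + t(a_i, ã)}` and
`β̃ := min{e_{w_ℓ}, β_{a_{i+1}} − s(ã) − t(ã, a_{i+1})}` satisfy `α̃ ≤ β̃`, then
the tour `A +_i ã` is time-feasible.  Here the tour is `a 0, …, a (n+1)` (`a 0`
and `a (n+1)` being the depot), `wS c`/`wE c` are the start/end of the time
window assigned to location `c` (with `wS x = s_{w_ℓ}`, `wE x = e_{w_ℓ}`),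
`s` the service times, `t` the travel times, and `α`, `β` the earliest/latest
arrival times of the (time-feasible) tour `A`. -/
theorem insertion_feasibility
    {Loc : Type} (n : ℕ) (a : ℕ → Loc) (x : Loc)
    (wS wE : Loc → ℝ) (s : Loc → ℝ) (t : Loc → Loc → ℝ)
    (start endT : ℝ) (α β : ℕ → ℝ) (i : ℕ) (hi : i ≤ n)
    (hs : ∀ c, 0 ≤ s c) (ht : ∀ c d, 0 ≤ t c d)
    -- earliest arrival times of A
    (hα0 : α 0 = start)
    (hαrec : ∀ j, j + 1 ≤ n →
      α (j + 1) = max (wS (a (j + 1))) (α j + s (a j) + t (a j) (a (j + 1))))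
    (hαend : α (n + 1) = α n + s (a n) + t (a n) (a (n + 1)))
    -- latest arrival times of A
    (hβend : β (n + 1) = endT)
    (hβrec : ∀ j, 1 ≤ j → j ≤ n →
      β j = min (wE (a j)) (β (j + 1) - s (a j) - t (a j) (a (j + 1))))
    (hβ0 : β 0 = β 1 - t (a 0) (a 1))
    -- time-feasibility of A
    (hfeas : ∀ j, 1 ≤ j → j ≤ n → wS (a j) ≤ α j ∧ α j ≤ wE (a j))
    (hret : α (n + 1) ≤ endT)
    -- the insertion condition α̃ ≤ β̃
    (hins : max (wS x) (α i + s (a i) + t (a i) x)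
      ≤ min (wE x) (β (i + 1) - s x - t x (a (i + 1)))) :
    -- then A +_i x is time-feasible:
    ∀ α' : ℕ → ℝ,
      α' 0 = start →
      (∀ j, j + 1 ≤ n + 1 →
        α' (j + 1) = max (wS (insertAt a x i (j + 1)))
          (α' j + s (insertAt a x i j) + t (insertAt a x i j) (insertAt a x i (j + 1)))) →
      α' (n + 2) = α' (n + 1) + s (insertAt a x i (n + 1)) +
        t (insertAt a x i (n + 1)) (insertAt a x i (n + 2)) →
      (∀ k, 1 ≤ k → k ≤ n + 1 →
        wS (insertAt a x i k) ≤ α' k ∧ α' k ≤ wE (insertAt a x i k)) ∧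
      α' (n + 2) ≤ endT := by
  intro α' hα'0 hα'rec hα'end
  set b := insertAt a x i with hb
  -- basic facts about b
  have hb1 : ∀ j, j ≤ i → b j = a j := by
    intro j hj; simp [hb, insertAt, hj]
  have hb2 : b (i + 1) = x := by
    simp [hb, insertAt]
  have hb3 : ∀ m, i + 1 ≤ m → b (m + 1) = a m := by
    intro m hm
    have h1 : ¬ (m + 1 ≤ i) := by omega
    have h2 : m + 1 ≠ i + 1 := by omega
    simp [hb, insertAt, h1, h2]
    intro h; exact absurd h (by omega)
  -- α' agrees with α up to position i
  have hαeq : ∀ j, j ≤ i → α' j = α j := by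
    intro j
    induction j with
    | zero => intro _; rw [hα'0, hα0]
    | succ j ih =>
      intro hj
      have hji : j ≤ i := by omega
      rw [hα'rec j (by omega), hαrec j (by omega), hb1 j hji, hb1 (j+1) hj, ih hji]
  -- α ≤ β on A
  have hαβaux : ∀ d j, j + d = n + 1 → 1 ≤ j → α j ≤ β j := by
    intro d
    induction d with
    | zero =>
      intro j hj _
      have : j = n + 1 := by omega
      subst this; rw [hβend]; exact hret
    | succ d ih =>
      intro j hj h1
      have hjn : j ≤ n := by omega
      have hnext : α (j + 1) ≤ β (j + 1) := ih (j+1) (by omega) (by omega)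
      have hstep : α j + s (a j) + t (a j) (a (j+1)) ≤ α (j + 1) := by
        rcases Nat.lt_or_ge j n with h | h
        · rw [hαrec j (by omega)]; exact le_max_right _ _
        · have : j = n := by omega
          subst this; rw [hαend]
      rw [hβrec j h1 hjn]
      refine le_min (hfeas j h1 hjn).2 (by linarith)
  have hαβ : ∀ j, 1 ≤ j → j ≤ n + 1 → α j ≤ β j := by
    intro j h1 h2; exact hαβaux (n + 1 - j) j (by omega) h1
  -- the value of α' at the inserted customer
  have hx : α' (i + 1) = max (wS x) (α i + s (a i) + t (a i) x) := by
    rw [hα'rec i (by omega), hb2, hb1 i le_rfl, hαeq i le_rfl]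
  have hxβ : α' (i + 1) ≤ β (i + 1) - s x - t x (a (i + 1)) := by
    rw [hx]; exact le_trans hins (min_le_right _ _)
  have hxE : α' (i + 1) ≤ wE x := by
    rw [hx]; exact le_trans hins (min_le_left _ _)
  -- after the insertion point, α' is dominated by β (shifted)
  have hQ : ∀ m, i + 1 ≤ m → m ≤ n → α' (m + 1) ≤ β m := by
    intro m hm
    induction m, hm using Nat.le_induction with
    | base =>
      intro hin
      rw [hα'rec (i + 1) (by omega), hb2, hb3 (i+1) le_rfl]
      have h1 : wS (a (i + 1)) ≤ β (i + 1) :=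
        le_trans (hfeas (i+1) (by omega) hin).1 (hαβ (i+1) (by omega) (by omega))
      have h2 : α' (i + 1) + s x + t x (a (i + 1)) ≤ β (i + 1) := by linarith
      exact max_le h1 h2
    | succ m hm ih =>
      intro hm1n
      have hmn : m ≤ n := by omega
      have hprev : α' (m + 1) ≤ β m := ih hmn
      have hβm : β m ≤ β (m + 1) - s (a m) - t (a m) (a (m + 1)) := by
        rw [hβrec m (by omega) hmn]; exact min_le_right _ _
      rw [hα'rec (m + 1) (by omega), hb3 m (by omega), hb3 (m+1) (by omega)]
      have h1 : wS (a (m + 1)) ≤ β (m + 1) :=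
        le_trans (hfeas (m+1) (by omega) hm1n).1 (hαβ (m+1) (by omega) (by omega))
      have h2 : α' (m + 1) + s (a m) + t (a m) (a (m + 1)) ≤ β (m + 1) := by linarith
      exact max_le h1 h2
  constructor
  · -- window feasibility
    intro k hk1 hk2
    obtain ⟨j, rfl⟩ : ∃ j, k = j + 1 := ⟨k - 1, by omega⟩
    have hrec := hα'rec j (by omega)
    constructor
    · rw [hrec]; exact le_max_left _ _
    · rcases Nat.lt_or_ge (j + 1) (i + 1) with h | h
      · -- j + 1 ≤ i
        have hji : j + 1 ≤ i := by omega
        rw [hb1 (j+1) hji, hαeq (j+1) hji]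
        exact (hfeas (j+1) (by omega) (by omega)).2
      · rcases Nat.eq_or_lt_of_le h with h' | h'
        · -- j + 1 = i + 1
          have : j = i := by omega
          subst this
          rw [hb2]; exact hxE
        · -- j + 1 ≥ i + 2, so j ≥ i + 1
          have hji : i + 1 ≤ j := by omega
          have hjn : j ≤ n := by omega
          rw [hb3 j hji]
          have := hQ j hji hjn
          have hβj : β j ≤ wE (a j) := by
            rw [hβrec j (by omega) hjn]; exact min_le_left _ _
          linarith
  · -- return to depot in time
    have hbn2 : b (n + 2) = a (n + 1) := hb3 (n + 1) (by omega)
    rcases Nat.eq_or_lt_of_le hi with h | h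
    · -- i = n
      subst h
      rw [hα'end, hbn2, hb2]
      have := hxβ
      rw [← hβend]
      linarith
    · -- i < n
      have hbn1 : b (n + 1) = a n := hb3 n (by omega)
      have hn : α' (n + 1) ≤ β n := hQ n (by omega) le_rfl
      have hβn : β n ≤ β (n + 1) - s (a n) - t (a n) (a (n + 1)) := by
        rw [hβrec n (by omega) le_rfl]; exact min_le_right _ _
      rw [hα'end, hbn1, hbn2, ← hβend]
      linarith
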